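/- Let p be a prime, δ > 0, and n ≥ ⌊δ^{−2}⌋. For any function f: 𝔽_p^n → [0,1], there is a subspace H of 𝔽_p^n of codimension ⌊δ^{−2}⌋ which is δ-weakly-regular with respect to f. -/

import Mathlib

open Finset
open scoped Classical

/-- Average of `f` over the affine translate `H + x`, i.e. the averaged function `f_H`. -/
noncomputable def cosetAvg {p n : ℕ} [NeZero p] (f : (Fin n → ZMod p) → ℝ)
    (H : Submodule (ZMod p) (Fin n → ZMod p)) (x : Fin n → ZMod p) : ℝ :=
  (∑ y ∈ Finset.univ.filter (fun y => y - x ∈ H), f y) / (Nat.card H : ℝ)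

/-- The Fourier coefficient `f̂(χ) = p^{-n} Σ_x f(x) χ(x)` of `f : 𝔽_p^n → ℝ`. -/
noncomputable def fpFourier {p n : ℕ} [NeZero p] (f : (Fin n → ZMod p) → ℝ)
    (χ : AddChar (Fin n → ZMod p) ℂ) : ℂ :=
  (∑ x, (f x : ℂ) * χ x) / (p : ℂ) ^ n

/-- `H` is `δ`-weakly-regular with respect to `f` if `|f̂(χ) − f̂_H(χ)| ≤ δ` for every
character `χ`. -/
def WeaklyRegular {p n : ℕ} [NeZero p] (δ : ℝ) (f : (Fin n → ZMod p) → ℝ)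
    (H : Submodule (ZMod p) (Fin n → ZMod p)) : Prop :=
  ∀ χ : AddChar (Fin n → ZMod p) ℂ, ‖fpFourier f χ - fpFourier (cosetAvg f H) χ‖ ≤ δ

variable {p n : ℕ} [Fact p.Prime]

/-- Kernel of an additive character as a submodule. -/
def charKer (χ : AddChar (Fin n → ZMod p) ℂ) : Submodule (ZMod p) (Fin n → ZMod p) where
  carrier := {x | χ x = 1}
  zero_mem' := χ.map_zero_eq_one
  add_mem' := fun {a b} ha hb => by
    simp only [Set.mem_setOf_eq] at *
    rw [AddChar.map_add_eq_mul, ha, hb, one_mul]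
  smul_mem' := fun c x hx => by
    simp only [Set.mem_setOf_eq] at *
    have h1 : c • x = c.val • x := by
      conv_lhs => rw [← ZMod.natCast_rightInverse c]
      rw [Nat.cast_smul_eq_nsmul]
    rw [h1, AddChar.map_nsmul_eq_pow, hx, one_pow]

lemma mem_charKer {χ : AddChar (Fin n → ZMod p) ℂ} {x} : x ∈ charKer χ ↔ χ x = 1 := Iff.rfl

lemma card_quotient_charKer_le (χ : AddChar (Fin n → ZMod p) ℂ) :
    Nat.card ((Fin n → ZMod p) ⧸ charKer χ) ≤ p := by
  classical
  have hp : 0 < p := (Fact.out : p.Prime).pos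
  -- the map induced by χ on the quotient
  set g : ((Fin n → ZMod p) ⧸ charKer χ) → ℂ := fun q => χ q.out with hg
  have hmk : ∀ q : (Fin n → ZMod p) ⧸ charKer χ, Submodule.Quotient.mk q.out = q :=
    fun q => Quotient.out_eq q
  have hginj : Function.Injective g := by
    intro a b hab
    have : χ (a.out - b.out) = 1 := by
      rw [sub_eq_add_neg, AddChar.map_add_eq_mul, AddChar.map_neg_eq_inv]
      simp only [hg] at hab
      rw [hab, mul_inv_cancel₀]
      have := χ.val_isUnit b.out
      exact this.ne_zero
    have hmem : a.out - b.out ∈ charKer χ := this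
    have := (Submodule.Quotient.eq (charKer χ)).2 hmem
    rwa [hmk, hmk] at this
  -- values of g are p-th roots of unity
  have hroot : ∀ q, g q ∈ (Polynomial.nthRoots p (1 : ℂ)).toFinset := by
    intro q
    rw [Multiset.mem_toFinset, Polynomial.mem_nthRoots hp]
    have hzero : (p • q.out : Fin n → ZMod p) = 0 := by
      funext i
      simp [nsmul_eq_mul, ZMod.natCast_self]
    calc (g q) ^ p = χ (p • q.out) := (AddChar.map_nsmul_eq_pow χ p q.out).symm
    _ = 1 := by rw [hzero, AddChar.map_zero_eq_one]
  let g' : ((Fin n → ZMod p) ⧸ charKer χ) → (Polynomial.nthRoots p (1 : ℂ)).toFinset :=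
    fun q => ⟨g q, hroot q⟩
  have : Function.Injective g' := fun a b h => hginj (congrArg Subtype.val h)
  calc Nat.card ((Fin n → ZMod p) ⧸ charKer χ)
      ≤ Nat.card (Polynomial.nthRoots p (1 : ℂ)).toFinset := Nat.card_le_card_of_injective g' this
    _ = (Polynomial.nthRoots p (1 : ℂ)).toFinset.card := by
        rw [Nat.card_eq_fintype_card, Fintype.card_coe]
    _ ≤ Multiset.card (Polynomial.nthRoots p (1 : ℂ)) := Multiset.toFinset_card_le _
    _ ≤ p := Polynomial.card_nthRoots p (1 : ℂ)

lemma finrank_charKer (χ : AddChar (Fin n → ZMod p) ℂ) :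
    n ≤ Module.finrank (ZMod p) (charKer χ) + 1 := by
  have hp : 1 < p := (Fact.out : p.Prime).one_lt
  have hcardV : Nat.card (Fin n → ZMod p) = p ^ n := by
    rw [Nat.card_eq_fintype_card, Fintype.card_fun, ZMod.card, Fintype.card_fin]
  have hcardK : Nat.card (charKer χ) = p ^ Module.finrank (ZMod p) (charKer χ) := by
    rw [Nat.card_eq_fintype_card, Module.card_eq_pow_finrank (K := ZMod p), ZMod.card]
  have h := Submodule.card_eq_card_quotient_mul_card (charKer χ)
  rw [hcardV, hcardK] at h
  have hq := card_quotient_charKer_le χ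
  have : p ^ n ≤ p ^ (Module.finrank (ZMod p) (charKer χ) + 1) := by
    rw [pow_succ, h]
    exact Nat.mul_le_mul_left _ hq
  exact (Nat.pow_le_pow_iff_right hp).1 this

lemma finrank_inf_charKer (S : Finset (AddChar (Fin n → ZMod p) ℂ)) :
    n ≤ Module.finrank (ZMod p) (S.inf charKer : Submodule (ZMod p) (Fin n → ZMod p)) + S.card := by
  classical
  induction S using Finset.cons_induction with
  | empty =>
      simp only [Finset.inf_empty, Finset.card_empty, add_zero]
      rw [Finset.inf_empty, finrank_top, Module.finrank_fin_fun]
  | cons a s ha ih =>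
      rw [Finset.inf_cons, Finset.card_cons]
      have h1 := Submodule.finrank_sup_add_finrank_inf_eq (charKer a)
        (s.inf charKer : Submodule (ZMod p) (Fin n → ZMod p))
      have h2 : Module.finrank (ZMod p)
          ((charKer a ⊔ s.inf charKer : Submodule (ZMod p) (Fin n → ZMod p))) ≤ n := by
        have := Submodule.finrank_le (charKer a ⊔ s.inf charKer :
          Submodule (ZMod p) (Fin n → ZMod p))
        rwa [Module.finrank_fin_fun] at this
      have h3 := finrank_charKer a
      omega


lemma inner_sum_char (χ : AddChar (Fin n → ZMod p) ℂ) (H : Submodule (ZMod p) (Fin n → ZMod p))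
    (y : Fin n → ZMod p) :
    (∑ x ∈ univ.filter (fun x => y - x ∈ H), χ x)
      = χ y * ∑ h : H, χ (-(h : Fin n → ZMod p)) := by
  classical
  let e : H ≃ {x : Fin n → ZMod p // y - x ∈ H} :=
    { toFun := fun h => ⟨y - (h : Fin n → ZMod p), by simpa using h.2⟩
      invFun := fun x => ⟨y - (x : Fin n → ZMod p), x.2⟩
      left_inv := fun h => by ext; simp
      right_inv := fun x => by ext; simp }
  have h1 : (∑ x ∈ univ.filter (fun x => y - x ∈ H), χ x)
      = ∑ x : {x : Fin n → ZMod p // y - x ∈ H}, χ (x : Fin n → ZMod p) :=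
    Finset.sum_subtype (univ.filter (fun x => y - x ∈ H)) (by simp) χ
  have h2 : (∑ x : {x : Fin n → ZMod p // y - x ∈ H}, χ (x : Fin n → ZMod p))
      = ∑ h : H, χ (y - (h : Fin n → ZMod p)) :=
    (Fintype.sum_equiv e (fun h => χ (y - (h : Fin n → ZMod p)))
      (fun x => χ (x : Fin n → ZMod p)) (fun h => rfl)).symm
  rw [h1, h2, Finset.mul_sum]
  refine Finset.sum_congr rfl fun h _ => ?_
  rw [sub_eq_add_neg, AddChar.map_add_eq_mul]

lemma fourier_cosetAvg (f : (Fin n → ZMod p) → ℝ) (H : Submodule (ZMod p) (Fin n → ZMod p))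
    (χ : AddChar (Fin n → ZMod p) ℂ) :
    fpFourier (cosetAvg f H) χ = if ∀ x ∈ H, χ x = 1 then fpFourier f χ else 0 := by
  classical
  have hNpos : 0 < Nat.card H := Nat.card_pos
  have hNc : (Nat.card H : ℂ) ≠ 0 := by exact_mod_cast hNpos.ne'
  set c : ℂ := ∑ h : H, χ (-(h : Fin n → ZMod p)) with hc
  have main : (∑ x, ((cosetAvg f H x : ℝ) : ℂ) * χ x)
      = (∑ y, (f y : ℂ) * χ y) * c / (Nat.card H : ℂ) := by
    have step1 : ∀ x, ((cosetAvg f H x : ℝ) : ℂ) * χ x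
        = (∑ y ∈ univ.filter (fun y => y - x ∈ H), (f y : ℂ) * χ x) / (Nat.card H : ℂ) := by
      intro x
      rw [cosetAvg]
      push_cast
      rw [div_mul_eq_mul_div, Finset.sum_mul]
    rw [Finset.sum_congr rfl (fun x _ => step1 x), ← Finset.sum_div]
    congr 1
    rw [Finset.sum_comm' (s := univ) (t := fun x => univ.filter (fun y => y - x ∈ H))
      (t' := univ) (s' := fun y => univ.filter (fun x => y - x ∈ H))
      (by intro x y; simp)]
    have : ∀ y, (∑ x ∈ univ.filter (fun x => y - x ∈ H), (f y : ℂ) * χ x)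
        = (f y : ℂ) * χ y * c := by
      intro y
      rw [← Finset.mul_sum, inner_sum_char, mul_assoc]
    rw [Finset.sum_congr rfl (fun y _ => this y), ← Finset.sum_mul]
  by_cases hχ : ∀ x ∈ H, χ x = 1
  · have hcN : c = (Nat.card H : ℂ) := by
      rw [hc]
      have : ∀ h : H, χ (-(h : Fin n → ZMod p)) = 1 := by
        intro h
        rw [AddChar.map_neg_eq_inv, hχ _ h.2, inv_one]
      rw [Finset.sum_congr rfl (fun h _ => this h), Finset.sum_const, Finset.card_univ,
        Nat.card_eq_fintype_card]
      simp
    rw [if_pos hχ, fpFourier, fpFourier, main, hcN, mul_div_assoc,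
      div_self hNc, mul_one]
  · have hc0 : c = 0 := by
      push_neg at hχ
      obtain ⟨x0, hx0, hx0'⟩ := hχ
      set ψ : AddChar H ℂ := χ.compAddMonoidHom H.subtype.toAddMonoidHom with hψ
      have hψne : ψ ≠ 0 := by
        intro h
        apply hx0'
        have : ψ ⟨x0, hx0⟩ = 1 := by rw [h]; simp
        simpa [hψ] using this
      have : c = ∑ h : H, ψ h := by
        rw [hc]
        refine (Fintype.sum_equiv (Equiv.neg H) _ _ (fun h => ?_)).symm
        simp [hψ]
      rw [this, AddChar.sum_eq_ite]
      simp [hψne]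
    rw [if_neg hχ, fpFourier, main, hc0, mul_zero, zero_div, zero_div]

set_option maxHeartbeats 1000000 in
lemma sum_sq_fourier_le (f : (Fin n → ZMod p) → ℝ) (hf : ∀ x, f x ∈ Set.Icc (0:ℝ) 1)
    (s : Finset (AddChar (Fin n → ZMod p) ℂ)) :
    ∑ χ ∈ s, ‖fpFourier f χ‖ ^ 2 ≤ 1 := by
  classical
  have hp : 0 < p := (Fact.out : p.Prime).pos
  set N : ℝ := (p : ℝ) ^ n with hNdef
  have hN : 0 < N := by positivity
  set r : ℝ := Real.sqrt N with hrdef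
  have hr : 0 < r := Real.sqrt_pos.2 hN
  have hr2 : r ^ 2 = N := Real.sq_sqrt hN.le
  have hcardV : (Fintype.card (Fin n → ZMod p) : ℝ) = N := by
    rw [Fintype.card_fun, ZMod.card, Fintype.card_fin]; push_cast; rfl
  set v : AddChar (Fin n → ZMod p) ℂ → EuclideanSpace ℂ (Fin n → ZMod p) :=
    fun χ => WithLp.toLp 2 (fun x => (r⁻¹ : ℂ) * (starRingEnd ℂ) (χ x)) with hv
  have hsum : ∀ χ ψ : AddChar (Fin n → ZMod p) ℂ,
      (∑ x, χ x * (starRingEnd ℂ) (ψ x)) = if χ = ψ then (N : ℂ) else 0 := by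
    intro χ ψ
    have h1 : ∀ x, χ x * (starRingEnd ℂ) (ψ x) = (χ * ψ⁻¹) x := by
      intro x
      rw [AddChar.mul_apply, AddChar.inv_apply', AddChar.inv_apply_eq_conj]
    rw [Finset.sum_congr rfl (fun x _ => h1 x), AddChar.sum_eq_ite]
    have h2 : (χ * ψ⁻¹ = 0) ↔ χ = ψ := by
      rw [show (0 : AddChar (Fin n → ZMod p) ℂ) = 1 from rfl, mul_inv_eq_one]
    simp only [h2]
    split_ifs with h
    · rw [← hcardV]; push_cast; rfl
    · rfl
  have hortho : Orthonormal ℂ v := by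
    rw [orthonormal_iff_ite]
    intro χ ψ
    rw [PiLp.inner_apply]
    have : ∀ x, (inner ℂ (v χ x) (v ψ x) : ℂ)
        = (r⁻¹ : ℂ) * (r⁻¹ : ℂ) * (χ x * (starRingEnd ℂ) (ψ x)) := by
      intro x
      rw [RCLike.inner_apply]
      simp only [hv, PiLp.toLp_apply, map_mul, map_inv₀, Complex.conj_ofReal, RCLike.conj_conj]
      ring
    rw [Finset.sum_congr rfl (fun x _ => this x), ← Finset.mul_sum, hsum]
    have hrne : (r : ℂ) ≠ 0 := by exact_mod_cast hr.ne'
    split_ifs with h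
    · have hN' : (N : ℂ) = (r : ℂ) * (r : ℂ) := by push_cast [← hr2]; ring
      rw [hN']
      field_simp
    · simp
  set F : EuclideanSpace ℂ (Fin n → ZMod p) := WithLp.toLp 2 (fun x => (f x : ℂ)) with hF
  have hinner : ∀ χ, (inner ℂ (v χ) F : ℂ) = (r : ℂ) * fpFourier f χ := by
    intro χ
    rw [PiLp.inner_apply]
    have : ∀ x, (inner ℂ (v χ x) (F x) : ℂ) = (r⁻¹ : ℂ) * (f x * χ x) := by
      intro x
      rw [RCLike.inner_apply]
      simp only [hv, hF, PiLp.toLp_apply, map_mul, map_inv₀, Complex.conj_ofReal, RCLike.conj_conj]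
      ring
    rw [Finset.sum_congr rfl (fun x _ => this x), ← Finset.mul_sum, fpFourier]
    have hrne : (r : ℂ) ≠ 0 := by exact_mod_cast hr.ne'
    have h1 : ((p:ℂ))^n = (r : ℂ) * (r : ℂ) := by
      have h2 : (N : ℂ) = (r : ℂ) * (r : ℂ) := by push_cast [← hr2]; ring
      rw [← h2, hNdef]; push_cast; ring
    rw [h1]
    field_simp
  have hbessel := Orthonormal.sum_inner_products_le (𝕜 := ℂ) (E := EuclideanSpace ℂ (Fin n → ZMod p)) F hortho (s := s)
  have hnormF : ‖F‖ ^ 2 ≤ N := by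
    rw [EuclideanSpace.norm_eq, Real.sq_sqrt (by positivity)]
    calc (∑ x, ‖F x‖ ^ 2) ≤ ∑ _x : Fin n → ZMod p, (1:ℝ) := by
          refine Finset.sum_le_sum fun x _ => ?_
          have := hf x
          rw [hF]
          simp only [PiLp.toLp_apply, Complex.norm_real, Real.norm_eq_abs]
          rw [abs_of_nonneg this.1]
          nlinarith [this.1, this.2]
      _ = N := by rw [Finset.sum_const, Finset.card_univ, nsmul_eq_mul, mul_one, hcardV]
  have hterm : ∀ χ, ‖(inner ℂ (v χ) F : ℂ)‖ ^ 2 = N * ‖fpFourier f χ‖ ^ 2 := by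
    intro χ
    rw [hinner, norm_mul, Complex.norm_real, Real.norm_eq_abs, abs_of_pos hr, mul_pow, hr2]
  rw [Finset.sum_congr rfl (fun χ _ => hterm χ), ← Finset.mul_sum] at hbessel
  have := hbessel.trans hnormF
  have hfin : N * ∑ χ ∈ s, ‖fpFourier f χ‖ ^ 2 ≤ N * 1 := by rwa [mul_one]
  exact le_of_mul_le_mul_left hfin hN

theorem weak_regularity_lemma (p n : ℕ) [Fact p.Prime] (δ : ℝ) (hδ : 0 < δ)
    (hn : ⌊1 / δ ^ 2⌋₊ ≤ n) (f : (Fin n → ZMod p) → ℝ) (hf : ∀ x, f x ∈ Set.Icc (0 : ℝ) 1) :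
    ∃ H : Submodule (ZMod p) (Fin n → ZMod p),
      n - Module.finrank (ZMod p) H = ⌊1 / δ ^ 2⌋₊ ∧ WeaklyRegular δ f H := by
  classical
  set m : ℕ := ⌊1 / δ ^ 2⌋₊ with hm
  set S : Finset (AddChar (Fin n → ZMod p) ℂ) :=
    univ.filter (fun χ => δ < ‖fpFourier f χ‖) with hS
  have hcard : S.card ≤ m := by
    have h1 : (S.card : ℝ) * δ ^ 2 ≤ 1 := by
      calc (S.card : ℝ) * δ ^ 2 = ∑ _χ ∈ S, δ ^ 2 := by rw [Finset.sum_const, nsmul_eq_mul]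
        _ ≤ ∑ χ ∈ S, ‖fpFourier f χ‖ ^ 2 := by
            refine Finset.sum_le_sum fun χ hχ => ?_
            have := (Finset.mem_filter.1 hχ).2
            nlinarith [norm_nonneg (fpFourier f χ)]
        _ ≤ 1 := sum_sq_fourier_le f hf S
    have h2 : (S.card : ℝ) ≤ 1 / δ ^ 2 := by
      rw [le_div_iff₀ (by positivity)]
      exact h1
    exact Nat.le_floor h2
  set H0 : Submodule (ZMod p) (Fin n → ZMod p) := S.inf charKer with hH0
  have hfr : n - m ≤ Module.finrank (ZMod p) H0 := by
    have h := finrank_inf_charKer S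
    rw [← hH0] at h
    omega
  obtain ⟨g, hg⟩ := exists_linearIndependent_of_le_finrank (R := ZMod p) (M := H0) hfr
  let g' : Fin (n - m) → (Fin n → ZMod p) := fun i => (g i : Fin n → ZMod p)
  have hg' : LinearIndependent (ZMod p) g' := hg.map' H0.subtype (Submodule.ker_subtype H0)
  set H : Submodule (ZMod p) (Fin n → ZMod p) := Submodule.span (ZMod p) (Set.range g') with hH
  have hHle : H ≤ H0 := by
    rw [hH, Submodule.span_le]
    rintro x ⟨i, rfl⟩
    exact (g i).2
  have hfrH : Module.finrank (ZMod p) H = n - m := by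
    rw [hH, finrank_span_eq_card hg', Fintype.card_fin]
  refine ⟨H, ?_, ?_⟩
  · omega
  · intro χ
    by_cases hχ : ∀ x ∈ H, χ x = 1
    · rw [fourier_cosetAvg, if_pos hχ, sub_self, norm_zero]; exact hδ.le
    · rw [fourier_cosetAvg, if_neg hχ, sub_zero]
      by_contra hcon
      push_neg at hcon
      have hSmem : χ ∈ S := by
        rw [hS]
        exact Finset.mem_filter.2 ⟨Finset.mem_univ _, hcon⟩
      exact hχ fun x hx => (Finset.inf_le hSmem : H0 ≤ charKer χ) (hHle hx)
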